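/- (Legendre) Let a, n be real numbers with 0 < 2a < n. Then ∫_0^1 x^{a−1} (1 − x^n)^{−1/2} dx = cos(aπ/n) · ∫_0^∞ z^{a−1} (1 + z^n)^{−1/2} dz. -/

import Mathlib

open MeasureTheory intervalIntegral Set

lemma real_beta (s t : ℝ) (hs : 0 < s) (ht : 0 < t) :
    Real.Gamma s * Real.Gamma t =
      Real.Gamma (s + t) * ∫ x in (0:ℝ)..1, x ^ (s-1) * (1-x) ^ (t-1) := by
  have h := Complex.Gamma_mul_Gamma_eq_betaIntegral (s := (s:ℂ)) (t := (t:ℂ))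
    (by simpa using hs) (by simpa using ht)
  have hbeta : Complex.betaIntegral s t =
      ((∫ x in (0:ℝ)..1, x ^ (s-1) * (1-x) ^ (t-1) : ℝ) : ℂ) := by
    rw [← intervalIntegral.integral_ofReal, Complex.betaIntegral]
    refine intervalIntegral.integral_congr fun x hx => ?_
    rw [Set.uIcc_of_le (by norm_num : (0:ℝ) ≤ 1)] at hx
    push_cast
    rw [Complex.ofReal_cpow hx.1, Complex.ofReal_cpow (by linarith [hx.2] : (0:ℝ) ≤ 1 - x)]
    push_cast
    ring
  rw [hbeta, Complex.Gamma_ofReal, Complex.Gamma_ofReal, show ((s:ℂ) + t) = ((s+t : ℝ) : ℂ) by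
    push_cast; ring, Complex.Gamma_ofReal] at h
  exact_mod_cast h

lemma subst_pow {n : ℝ} (hn : 0 < n) (g : ℝ → ℝ) :
    ∫ t in Ioo (0:ℝ) 1, g t = ∫ x in Ioo (0:ℝ) 1, (n * x ^ (n-1)) * g (x ^ n) := by
  have himg : (fun x : ℝ => x ^ n) '' Ioo 0 1 = Ioo 0 1 := by
    ext t
    constructor
    · rintro ⟨x, ⟨hx0, hx1⟩, rfl⟩
      exact ⟨Real.rpow_pos_of_pos hx0 n, Real.rpow_lt_one hx0.le hx1 hn⟩
    · rintro ⟨ht0, ht1⟩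
      refine ⟨t ^ (n⁻¹), ⟨Real.rpow_pos_of_pos ht0 _, Real.rpow_lt_one ht0.le ht1 (by positivity)⟩, ?_⟩
      exact Real.rpow_inv_rpow ht0.le hn.ne'
  have hderiv : ∀ x ∈ Ioo (0:ℝ) 1, HasDerivWithinAt (fun x : ℝ => x ^ n)
      (n * x ^ (n-1)) (Ioo 0 1) x := fun x hx =>
    (Real.hasDerivAt_rpow_const (Or.inl hx.1.ne')).hasDerivWithinAt
  have hinj : InjOn (fun x : ℝ => x ^ n) (Ioo 0 1) :=
    fun x hx y hy hxy => by
      rcases lt_trichotomy x y with h | h | h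
      · exact absurd hxy (ne_of_lt (Real.rpow_lt_rpow hx.1.le h hn))
      · exact h
      · exact absurd hxy.symm (ne_of_lt (Real.rpow_lt_rpow hy.1.le h hn))
  have := integral_image_eq_integral_abs_deriv_smul measurableSet_Ioo hderiv hinj g
  rw [himg] at this
  rw [this]
  refine setIntegral_congr_fun measurableSet_Ioo fun x hx => ?_
  have : |n * x ^ (n-1)| = n * x ^ (n-1) := by
    exact abs_of_nonneg (mul_nonneg hn.le (Real.rpow_nonneg hx.1.le _))
  rw [smul_eq_mul, this]

lemma subst_frac (h : ℝ → ℝ) :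
    ∫ u in Ioi (0:ℝ), h u = ∫ y in Ioo (0:ℝ) 1, (1 - y)⁻¹ ^ 2 * h (y / (1 - y)) := by
  have himg : (fun y : ℝ => y / (1 - y)) '' Ioo 0 1 = Ioi 0 := by
    ext u
    constructor
    · rintro ⟨y, ⟨hy0, hy1⟩, rfl⟩
      exact div_pos hy0 (by linarith)
    · intro hu
      have hu' : (0:ℝ) < u := hu
      have h1 : (0:ℝ) < 1 + u := by linarith
      refine ⟨u / (1 + u), ⟨by positivity, by rw [div_lt_one h1]; linarith⟩, ?_⟩
      field_simp
      ring
  have hderiv : ∀ y ∈ Ioo (0:ℝ) 1, HasDerivWithinAt (fun y : ℝ => y / (1 - y))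
      ((1 - y)⁻¹ ^ 2) (Ioo 0 1) y := by
    intro y hy
    have h1 : (1 : ℝ) - y ≠ 0 := by intro h; linarith [hy.2]
    have : HasDerivAt (fun y : ℝ => y / (1 - y))
        ((1 * (1 - y) - y * (0 - 1)) / (1 - y) ^ 2) y :=
      (hasDerivAt_id y).div ((hasDerivAt_const y 1).sub (hasDerivAt_id y)) h1
    refine this.hasDerivWithinAt.congr_deriv ?_
    rw [inv_pow, inv_eq_one_div]; congr 1; ring
  have hinj : InjOn (fun y : ℝ => y / (1 - y)) (Ioo 0 1) := by
    intro x hx y hy hxy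
    have h1 : (1 : ℝ) - x ≠ 0 := by intro h; linarith [hx.2]
    have h2 : (1 : ℝ) - y ≠ 0 := by intro h; linarith [hy.2]
    field_simp at hxy
    linarith
  have := integral_image_eq_integral_abs_deriv_smul measurableSet_Ioo hderiv hinj h
  rw [himg] at this
  rw [this]
  refine setIntegral_congr_fun measurableSet_Ioo fun y hy => ?_
  have : |(1 - y)⁻¹ ^ 2| = (1 - y)⁻¹ ^ 2 := abs_of_nonneg (by positivity)
  rw [smul_eq_mul, this]

theorem legendre_z1 (a n : ℝ) (ha : 0 < a) (han : 2 * a < n) :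
    ∫ x in (0:ℝ)..1, x ^ (a - 1) * (1 - x ^ n) ^ (-(1:ℝ)/2) =
      Real.cos (a * Real.pi / n) *
        ∫ z in Set.Ioi (0:ℝ), z ^ (a - 1) * (1 + z ^ n) ^ (-(1:ℝ)/2) := by
  have hn : 0 < n := by linarith
  set s : ℝ := a / n with hs_def
  have hs : 0 < s := div_pos ha hn
  have hs2 : s < 1/2 := by rw [hs_def, div_lt_iff₀ hn]; linarith
  have hns : n * (s - 1) = a - n := by
    rw [hs_def]; field_simp
  -- Step A
  have stepA : ∫ t in (0:ℝ)..1, t ^ (s-1) * (1-t) ^ ((1:ℝ)/2-1) =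
      n * ∫ x in (0:ℝ)..1, x ^ (a - 1) * (1 - x ^ n) ^ (-(1:ℝ)/2) := by
    rw [intervalIntegral.integral_of_le zero_le_one, integral_Ioc_eq_integral_Ioo,
      intervalIntegral.integral_of_le zero_le_one, integral_Ioc_eq_integral_Ioo,
      subst_pow hn (fun t => t ^ (s-1) * (1-t) ^ ((1:ℝ)/2-1)), ← MeasureTheory.integral_const_mul]
    refine setIntegral_congr_fun measurableSet_Ioo fun x hx => ?_
    have hx0 := hx.1
    rw [← Real.rpow_mul hx0.le, hns]
    rw [show ((1:ℝ)/2 - 1) = -(1:ℝ)/2 by norm_num]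
    rw [show n * x ^ (n-1) * (x ^ (a-n) * (1 - x^n) ^ (-(1:ℝ)/2))
        = n * ((x ^ (n-1) * x ^ (a-n)) * (1 - x^n) ^ (-(1:ℝ)/2)) by ring,
      ← Real.rpow_add hx0, show n - 1 + (a - n) = a - 1 by ring]
  -- Step B
  have stepB : ∫ u in Ioi (0:ℝ), u ^ (s-1) * (1+u) ^ (-(1:ℝ)/2) =
      n * ∫ z in Ioi (0:ℝ), z ^ (a - 1) * (1 + z ^ n) ^ (-(1:ℝ)/2) := by
    rw [← integral_comp_rpow_Ioi_of_pos (g := fun u => u ^ (s-1) * (1+u) ^ (-(1:ℝ)/2)) hn,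
      ← MeasureTheory.integral_const_mul]
    refine setIntegral_congr_fun measurableSet_Ioi fun x hx => ?_
    have hx0 : (0:ℝ) < x := hx
    simp only [smul_eq_mul]
    rw [← Real.rpow_mul hx0.le, hns]
    rw [show n * x ^ (n-1) * (x ^ (a-n) * (1 + x^n) ^ (-(1:ℝ)/2))
        = n * ((x ^ (n-1) * x ^ (a-n)) * (1 + x^n) ^ (-(1:ℝ)/2)) by ring,
      ← Real.rpow_add hx0, show n - 1 + (a - n) = a - 1 by ring]
  -- Step C
  have stepC : ∫ u in Ioi (0:ℝ), u ^ (s-1) * (1+u) ^ (-(1:ℝ)/2) =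
      ∫ y in (0:ℝ)..1, y ^ (s-1) * (1-y) ^ (((1:ℝ)/2 - s)-1) := by
    rw [intervalIntegral.integral_of_le zero_le_one, integral_Ioc_eq_integral_Ioo,
      subst_frac (fun u => u ^ (s-1) * (1+u) ^ (-(1:ℝ)/2))]
    refine setIntegral_congr_fun measurableSet_Ioo fun y hy => ?_
    have hy0 : (0:ℝ) < y := hy.1
    have hy1 : (0:ℝ) < 1 - y := by linarith [hy.2]
    have e1 : 1 + y / (1 - y) = (1 - y)⁻¹ := by field_simp; ring
    have h2 : (1-y)⁻¹ ^ (2:ℕ) = (1-y) ^ (-(2:ℝ)) := by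
      rw [inv_pow, Real.rpow_neg hy1.le, ← Real.rpow_natCast (1-y) 2]
      norm_num
    have h3 : (y/(1-y)) ^ (s-1) = y ^ (s-1) * (1-y) ^ (-(s-1)) := by
      rw [Real.div_rpow hy0.le hy1.le, Real.rpow_neg hy1.le, div_eq_mul_inv]
    have h4 : ((1-y)⁻¹) ^ (-(1:ℝ)/2) = (1-y) ^ ((1:ℝ)/2) := by
      rw [Real.inv_rpow hy1.le, ← Real.rpow_neg hy1.le,
        show -(-(1:ℝ)/2) = (1:ℝ)/2 by norm_num]
    rw [e1, h2, h3, h4,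
      show (((1:ℝ)/2 - s) - 1) = -(2:ℝ) + (-(s-1) + (1:ℝ)/2) by ring,
      Real.rpow_add hy1, Real.rpow_add hy1]
    ring
  -- Beta evaluations
  have hgs := Real.Gamma_pos_of_pos hs
  have hgh := Real.Gamma_pos_of_pos (by norm_num : (0:ℝ) < 1/2)
  have hgsh := Real.Gamma_pos_of_pos (by linarith : (0:ℝ) < s + 1/2)
  have hghs := Real.Gamma_pos_of_pos (by linarith : (0:ℝ) < 1/2 - s)
  have beta1 := real_beta s (1/2) hs (by norm_num)
  have beta2 := real_beta s (1/2 - s) hs (by linarith)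
  rw [show s + (1/2 - s) = (1/2 : ℝ) by ring] at beta2
  rw [stepA] at beta1
  rw [← stepC, stepB] at beta2
  have hcos : Real.cos (a * Real.pi / n) = Real.cos (Real.pi * s) := by
    rw [hs_def]; ring_nf
  have hcpos : 0 < Real.cos (Real.pi * s) := by
    apply Real.cos_pos_of_mem_Ioo
    constructor
    · nlinarith [Real.pi_pos]
    · nlinarith [Real.pi_pos]
  have hrefl : Real.Gamma (s + 1/2) * Real.Gamma (1/2 - s) = Real.pi / Real.cos (Real.pi * s) := by
    have h := Real.Gamma_mul_Gamma_one_sub (s + 1/2)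
    rw [show (1 : ℝ) - (s + 1/2) = 1/2 - s by ring,
      show Real.pi * (s + 1/2) = Real.pi * s + Real.pi/2 by ring,
      Real.sin_add_pi_div_two] at h
    exact h
  have hrefl' : Real.cos (Real.pi * s) * (Real.Gamma (s + 1/2) * Real.Gamma (1/2 - s))
      = Real.pi := by
    rw [hrefl]; field_simp
  have hpi : Real.Gamma (1/2) * Real.Gamma (1/2) = Real.pi := by
    rw [Real.Gamma_one_half_eq]; exact Real.mul_self_sqrt Real.pi_pos.le
  rw [hcos]
  have key : (Real.Gamma (s + 1/2) * Real.Gamma (1/2) * n) *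
        (∫ x in (0:ℝ)..1, x ^ (a - 1) * (1 - x ^ n) ^ (-(1:ℝ)/2)) =
      (Real.Gamma (s + 1/2) * Real.Gamma (1/2) * n) *
        (Real.cos (Real.pi * s) *
          ∫ z in Set.Ioi (0:ℝ), z ^ (a - 1) * (1 + z ^ n) ^ (-(1:ℝ)/2)) := by
    linear_combination (- Real.Gamma (1/2)) * beta1
      + Real.cos (Real.pi * s) * Real.Gamma (s + 1/2) * beta2
      - Real.Gamma s * hrefl' + Real.Gamma s * hpi
  exact mul_left_cancel₀ (by positivity) key
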